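/- Let ψ : {1,2,3} → {1,2} be given by ψ(1) = 1, ψ(2) = 2, ψ(3) = 2, and let ψ_* act letterwise on strings. Let T_sub ⊆ T_{2,free} be the rooted subtree of all alternating strings on {1,2} that do not end with the letter 2, let T_{2,mono†} = {∅, 1, 2, 12} be the anti-monotone tree, and let id denote the 1-letter tree {∅, 1}. Then ψ_* restricts to a bijection (indeed a rooted graph isomorphism) from the composed tree T_{2,mono†}(T_sub, id) onto T_{2,free}. -/

import Mathlib

/-- The subordination tree `T_sub ⊆ T_{2,free}`: all alternating strings on
`{1,2}` (encoded as `Fin 2`) that do not end with the letter `2` (encoded `1`). -/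
def Tsub : Set (List (Fin 2)) :=
  {s | s.Chain' (· ≠ ·) ∧ s.getLast? ≠ some 1}

/-- The composed tree `T_{2,mono†}(T_sub, id)` on the alphabet `{1,2,3}`
(encoded as `Fin 3`): explicitly
`{∅} ∪ {3} ∪ {s : s ∈ T_sub ∖ {∅}} ∪ {s3 : s ∈ T_sub ∖ {∅}}`. -/
def Tcomp : Set (List (Fin 3)) :=
  {w | w = [] ∨ w = [(2 : Fin 3)] ∨
    (∃ s ∈ Tsub, s ≠ [] ∧ w = s.map Fin.castSucc) ∨
    (∃ s ∈ Tsub, s ≠ [] ∧ w = s.map Fin.castSucc ++ [(2 : Fin 3)])}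

/-- The map `ψ : {1,2,3} → {1,2}` with `ψ(1)=1, ψ(2)=2, ψ(3)=2`. -/
def psiMap : Fin 3 → Fin 2 := fun j => if j = 0 then 0 else 1

/-- Candidate inverse of `ψ_*`. -/
def gInv (t : List (Fin 2)) : List (Fin 3) :=
  if t.getLast? = some 1 then (t.dropLast).map Fin.castSucc ++ [(2 : Fin 3)]
  else t.map Fin.castSucc

lemma psi_cast (a : Fin 2) : psiMap a.castSucc = a := by
  fin_cases a <;> rfl

lemma map_cast (s : List (Fin 2)) : (s.map Fin.castSucc).map psiMap = s := by
  induction s with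
  | nil => rfl
  | cons a l ih => simp [psi_cast, ih]

lemma psi_two : psiMap 2 = 1 := rfl

lemma map_cast_append (s : List (Fin 2)) :
    ((s.map Fin.castSucc ++ [(2 : Fin 3)]).map psiMap) = s ++ [1] := by
  rw [List.map_append, map_cast]
  rfl

lemma chain_cast {s : List (Fin 2)} (h : s.Chain' (· ≠ ·)) :
    (s.map Fin.castSucc).Chain' (· ≠ ·) := by
  unfold List.Chain' at *
  rw [List.isChain_map]
  exact h.imp fun a b hab => by
    simpa [Fin.castSucc_inj] using hab

/-- The letterwise map `ψ_*` restricts to a bijection (a rooted graph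
isomorphism) from the composed tree `T_{2,mono†}(T_sub, id)` onto `T_{2,free}`. -/
theorem stmt16 :
    Set.BijOn (List.map psiMap) Tcomp {s : List (Fin 2) | s.Chain' (· ≠ ·)} := by
  have hmapsto : Set.MapsTo (List.map psiMap) Tcomp
      {s : List (Fin 2) | s.Chain' (· ≠ ·)} := by
    rintro w (rfl | rfl | ⟨s, hs, hne, rfl⟩ | ⟨s, hs, hne, rfl⟩)
    · simp [List.Chain']
    · simp [List.Chain']
    · rw [Set.mem_setOf_eq, map_cast]; exact hs.1
    · rw [Set.mem_setOf_eq, map_cast_append]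
      rw [List.Chain', List.isChain_append]
      refine ⟨hs.1, List.isChain_singleton _, ?_⟩
      intro x hx y hy
      simp only [List.head?, Option.mem_def, Option.some.injEq] at hy
      subst hy
      intro hfalse
      exact hs.2 (by rw [← hfalse]; exact hx)
  have hg : Set.MapsTo gInv {s : List (Fin 2) | s.Chain' (· ≠ ·)} Tcomp := by
    intro t ht
    simp only [Set.mem_setOf_eq] at ht
    unfold gInv
    by_cases h1 : t.getLast? = some 1
    · rw [if_pos h1]
      -- t is nonempty, ends with 1
      rcases t.eq_nil_or_concat with rfl | ⟨l, a, rfl⟩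
      · simp at h1
      · rw [List.concat_eq_append] at h1 ht ⊢
        rw [List.getLast?_concat] at h1
        injection h1 with h1; subst h1
        rw [List.dropLast_concat]
        rcases eq_or_ne l [] with rfl | hl
        · right; left; rfl
        · right; right; right
          refine ⟨l, ⟨?_, ?_⟩, hl, rfl⟩
          · exact (List.isChain_append.mp ht).1
          · rw [List.Chain', List.isChain_append] at ht
            intro hcon
            exact ht.2.2 1 hcon 1 rfl rfl
    · rw [if_neg h1]
      rcases eq_or_ne t [] with rfl | ht0
      · left; rfl
      · right; right; left
        exact ⟨t, ⟨ht, h1⟩, ht0, rfl⟩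
  have hinv : Set.InvOn gInv (List.map psiMap) Tcomp
      {s : List (Fin 2) | s.Chain' (· ≠ ·)} := by
    constructor
    · -- left inverse on Tcomp
      rintro w (rfl | rfl | ⟨s, hs, hne, rfl⟩ | ⟨s, hs, hne, rfl⟩)
      · rfl
      · rfl
      · rw [map_cast]
        unfold gInv
        rw [if_neg hs.2]
      · rw [map_cast_append]
        unfold gInv
        rw [if_pos List.getLast?_concat, List.dropLast_concat]
    · -- right inverse on target
      intro t _
      unfold gInv
      by_cases h1 : t.getLast? = some 1
      · rw [if_pos h1, map_cast_append]
        rcases t.eq_nil_or_concat with rfl | ⟨l, a, rfl⟩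
        · simp at h1
        · rw [List.concat_eq_append] at h1 ⊢
          rw [List.getLast?_concat] at h1
          injection h1 with h1; subst h1
          rw [List.dropLast_concat]
      · rw [if_neg h1, map_cast]
  exact hinv.bijOn hmapsto hg
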